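/- Let E be a real normed vector space that is strictly convex as a normed space, i.e., for all x, y ∈ E with ‖x‖ = ‖y‖ = 1 and x ≠ y and all t ∈ (0,1), one has ‖t·x + (1−t)·y‖ < 1. Let 1 < p < ∞. Then the function x ↦ ‖x‖^p is strictly convex on E: for all x ≠ y and t ∈ (0,1), ‖t·x + (1−t)·y‖^p < t·‖x‖^p + (1−t)·‖y‖^p. -/

import Mathlib

open Set

/-- In a strictly convex normed space, `x ↦ ‖x‖ ^ p` is strictly convex for `1 < p < ∞`. -/
theorem norm_rpow_strictConvex
    (E : Type*) [NormedAddCommGroup E] [NormedSpace ℝ E]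
    (hsc : ∀ x y : E, ‖x‖ = 1 → ‖y‖ = 1 → x ≠ y → ∀ t : ℝ, t ∈ Ioo (0 : ℝ) 1 →
      ‖t • x + (1 - t) • y‖ < 1)
    (p : ℝ) (hp : 1 < p) :
    ∀ x y : E, x ≠ y → ∀ t : ℝ, t ∈ Ioo (0 : ℝ) 1 →
      ‖t • x + (1 - t) • y‖ ^ p < t * ‖x‖ ^ p + (1 - t) * ‖y‖ ^ p := by
  intro x y hxy t ht
  obtain ⟨ht0, ht1⟩ := ht
  have ht1' : 0 < 1 - t := by linarith
  by_cases h : ‖x‖ = ‖y‖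
  · -- equal norms, use strict convexity of the space
    have hr : 0 < ‖x‖ := by
      rcases lt_or_eq_of_le (norm_nonneg x) with hr | hr
      · exact hr
      · exfalso
        apply hxy
        have hx0 : x = 0 := by rwa [eq_comm, norm_eq_zero] at hr
        have hy0 : y = 0 := by
          rw [← norm_eq_zero, ← h, ← hr]
        rw [hx0, hy0]
    set r := ‖x‖ with hrdef
    have hrne : r ≠ 0 := ne_of_gt hr
    have hx' : ‖r⁻¹ • x‖ = 1 := by
      rw [norm_smul, norm_inv, Real.norm_eq_abs, abs_of_pos hr, inv_mul_cancel₀ hrne]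
    have hy' : ‖r⁻¹ • y‖ = 1 := by
      rw [norm_smul, norm_inv, Real.norm_eq_abs, abs_of_pos hr, ← h, inv_mul_cancel₀ hrne]
    have hne : r⁻¹ • x ≠ r⁻¹ • y := by
      intro hEq
      exact hxy (smul_right_injective E (inv_ne_zero hrne) hEq)
    have key := hsc _ _ hx' hy' hne t ⟨ht0, ht1⟩
    have heq : t • (r⁻¹ • x) + (1 - t) • (r⁻¹ • y) = r⁻¹ • (t • x + (1 - t) • y) := by
      rw [smul_add, smul_comm, smul_comm (1 - t)]
    rw [heq, norm_smul, norm_inv, Real.norm_eq_abs, abs_of_pos hr] at key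
    have hlt : ‖t • x + (1 - t) • y‖ < r := by
      rw [inv_mul_lt_iff₀ hr, mul_one] at key
      exact key
    calc ‖t • x + (1 - t) • y‖ ^ p < r ^ p :=
          Real.rpow_lt_rpow (norm_nonneg _) hlt (by linarith)
      _ = t * ‖x‖ ^ p + (1 - t) * ‖y‖ ^ p := by rw [← h, ← hrdef]; ring
  · -- unequal norms, use strict convexity of rpow
    have h1 : ‖t • x + (1 - t) • y‖ ≤ t * ‖x‖ + (1 - t) * ‖y‖ := by
      calc ‖t • x + (1 - t) • y‖ ≤ ‖t • x‖ + ‖(1 - t) • y‖ := norm_add_le _ _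
        _ = t * ‖x‖ + (1 - t) * ‖y‖ := by
          rw [norm_smul, norm_smul, Real.norm_eq_abs, Real.norm_eq_abs,
            abs_of_pos ht0, abs_of_pos ht1']
    have h2 := (strictConvexOn_rpow hp).2 (mem_Ici.2 (norm_nonneg x))
      (mem_Ici.2 (norm_nonneg y)) h ht0 ht1' (by ring)
    simp only [smul_eq_mul] at h2
    calc ‖t • x + (1 - t) • y‖ ^ p ≤ (t * ‖x‖ + (1 - t) * ‖y‖) ^ p :=
          Real.rpow_le_rpow (norm_nonneg _) h1 (by linarith)
      _ < t * ‖x‖ ^ p + (1 - t) * ‖y‖ ^ p := h2
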